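/- Let 0 < α ≤ 1/3 and H ≥ 0 with r₁² = 1/2 + H/(2√(1+H²)), r₂² = 1 − r₁². Consider the lattice Λ* ⊂ ℝ² generated by v₁* = (1/(√(1−(1−α)r₁²)))·(1/r₁, r₂(1−α)/√α) and v₂* = (0, √(1−(1−α)r₁²)/(r₂√α)). Then the minimum of |m v₁* + n v₂*|² over (m,n) ∈ ℤ² \ {(0,0)} equals 4(H²+1) if and only if H ≤ (1−3α)/(2√(α(1−2α))). -/

import Mathlib

lemma stmt13_aux_int (a b : ℤ) (h : ¬(a = 0 ∧ b = 0)) : 1 ≤ a ^ 2 - |a * b| + b ^ 2 := by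
  rcases eq_or_ne a 0 with ha | ha
  · have hb : b ≠ 0 := fun hb => h ⟨ha, hb⟩
    have := Int.one_le_abs hb
    simp only [ha, zero_mul, abs_zero]
    nlinarith [sq_abs b]
  rcases eq_or_ne b 0 with hb | hb
  · have := Int.one_le_abs ha
    simp only [hb, mul_zero, abs_zero]
    nlinarith [sq_abs a]
  · have h1 := Int.one_le_abs ha
    have h2 := Int.one_le_abs hb
    have h3 : |a * b| = |a| * |b| := abs_mul a b
    nlinarith [sq_nonneg (|a| - |b|), sq_abs a, sq_abs b]

lemma stmt13_aux_iff1 (α H s β : ℝ) (hα : 0 < α) (hα3 : α ≤ 1 / 3) (hH : 0 ≤ H)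
    (hs0 : 0 < s) (hs2 : s ^ 2 = 1 + H ^ 2)
    (hβ0 : 0 < β) (hβ2 : β ^ 2 = α * (1 - 2 * α)) :
    (H ≤ (1 - 3 * α) / (2 * β)) ↔ ((1 - α) * H ≤ (1 - 3 * α) * s) := by
  have hα1 : α < 1 := by linarith
  have h13 : 0 ≤ 1 - 3 * α := by linarith
  rw [le_div_iff₀ (by positivity)]
  constructor
  · intro h
    have hsq : (H * (2 * β)) ^ 2 ≤ (1 - 3 * α) ^ 2 := by
      nlinarith [mul_nonneg hH (by positivity : (0:ℝ) ≤ 2 * β)]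
    have hsq' : 4 * α * (1 - 2 * α) * H ^ 2 ≤ (1 - 3 * α) ^ 2 := by
      nlinarith [hsq, hβ2]
    nlinarith [hsq', hs2, mul_nonneg h13 hs0.le,
      mul_nonneg (by linarith : (0:ℝ) ≤ 1 - α) hH]
  · intro h
    have h' : ((1 - α) * H) ^ 2 ≤ ((1 - 3 * α) * s) ^ 2 := by
      nlinarith [mul_nonneg (by linarith : (0:ℝ) ≤ 1 - α) hH]
    have h'' : ((1 - α) * H) ^ 2 ≤ (1 - 3 * α) ^ 2 * (1 + H ^ 2) := by
      rw [mul_pow, mul_pow, hs2] at h'; nlinarith [h']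
    have hsq' : 4 * α * (1 - 2 * α) * H ^ 2 ≤ (1 - 3 * α) ^ 2 := by nlinarith [h'']
    nlinarith [hsq', hβ2, mul_nonneg hH hβ0.le, h13]

lemma stmt13_aux_dir1 (α H r₁ r₂ : ℝ) (hα : 0 < α) (hα1 : α < 1)
    (h1 : 0 < r₁) (h2 : 0 < r₂) (hr2 : r₂ ^ 2 = 1 - r₁ ^ 2)
    (hprod : 4 * (H ^ 2 + 1) * (r₁ ^ 2 * r₂ ^ 2) = 1)
    (hge : 4 * (H ^ 2 + 1) ≤ 1 / r₁ ^ 2 + (1 - α) / α) :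
    α ≤ (1 - α) * r₂ ^ 2 := by
  have hr1pos : 0 < r₁ ^ 2 := by positivity
  have hE : (1 / r₁ ^ 2 + (1 - α) / α) * (α * r₁ ^ 2 * r₂ ^ 2)
      = α * r₂ ^ 2 + (1 - α) * (r₁ ^ 2 * r₂ ^ 2) := by
    field_simp
  have hL : 4 * (H ^ 2 + 1) * (α * r₁ ^ 2 * r₂ ^ 2) = α := by
    linear_combination α * hprod
  have hge2 := mul_le_mul_of_nonneg_right hge (by positivity : (0:ℝ) ≤ α * r₁ ^ 2 * r₂ ^ 2)
  rw [hE, hL] at hge2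
  nlinarith [hge2, hr1pos, hr2]

lemma stmt13_aux_dir2 (α H r₁ r₂ : ℝ) (hα : 0 < α) (hα1 : α < 1)
    (h1 : 0 < r₁) (h2 : 0 < r₂) (hr2 : r₂ ^ 2 = 1 - r₁ ^ 2)
    (hprod : 4 * (H ^ 2 + 1) * (r₁ ^ 2 * r₂ ^ 2) = 1)
    (hge : α ≤ (1 - α) * r₂ ^ 2) :
    4 * (H ^ 2 + 1) ≤ 1 / r₁ ^ 2 + (1 - α) / α := by
  have hr1pos : 0 < r₁ ^ 2 := by positivity
  have hE : (1 / r₁ ^ 2 + (1 - α) / α) * (α * r₁ ^ 2 * r₂ ^ 2)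
      = α * r₂ ^ 2 + (1 - α) * (r₁ ^ 2 * r₂ ^ 2) := by
    field_simp
  have hL : 4 * (H ^ 2 + 1) * (α * r₁ ^ 2 * r₂ ^ 2) = α := by
    linear_combination α * hprod
  have hineq : α ≤ α * r₂ ^ 2 + (1 - α) * (r₁ ^ 2 * r₂ ^ 2) := by
    nlinarith [mul_le_mul_of_nonneg_right hge hr1pos.le, hr2]
  have hpos : (0:ℝ) < α * r₁ ^ 2 * r₂ ^ 2 := by positivity
  have h5 : 4 * (H ^ 2 + 1) * (α * r₁ ^ 2 * r₂ ^ 2)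
      ≤ (1 / r₁ ^ 2 + (1 - α) / α) * (α * r₁ ^ 2 * r₂ ^ 2) := by
    rw [hE, hL]; exact hineq
  exact le_of_mul_le_mul_right h5 hpos

lemma stmt13_aux_final (α H r₁ : ℝ) (m n : ℤ) (hmn : ¬(m = 0 ∧ n = 0))
    (hAM : 4 * (H ^ 2 + 1) ≤ 1 / r₁ ^ 2 + (1 - α) / α)
    (hbM : 2 / r₁ ^ 2 ≤ 4 * (H ^ 2 + 1))
    (hr1pos : 0 < r₁ ^ 2) :
    4 * (H ^ 2 + 1) ≤ (1 / r₁ ^ 2 + (1 - α) / α) * ((m : ℝ) + n) ^ 2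
      - (2 / r₁ ^ 2) * (((m : ℝ) + n) * n) + (4 * (H ^ 2 + 1)) * (n : ℝ) ^ 2 := by
  have hmn' : ¬((m + n) = 0 ∧ n = 0) := by
    rintro ⟨ha, hb⟩; exact hmn ⟨by omega, hb⟩
  have hKint := stmt13_aux_int (m + n) n hmn'
  have hK : (1:ℝ) ≤ ((m:ℝ) + n) ^ 2 - |((m:ℝ) + n) * n| + (n:ℝ) ^ 2 := by
    exact_mod_cast hKint
  have hM0 : (0:ℝ) < 4 * (H ^ 2 + 1) := by positivity
  have hb0 : (0:ℝ) ≤ 2 / r₁ ^ 2 := by positivity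
  have t1 : 0 ≤ ((1 / r₁ ^ 2 + (1 - α) / α) - 4 * (H ^ 2 + 1)) * ((m:ℝ) + n) ^ 2 :=
    mul_nonneg (by linarith) (sq_nonneg _)
  have t2 : 0 ≤ (4 * (H ^ 2 + 1) - 2 / r₁ ^ 2) * |((m:ℝ) + n) * n| :=
    mul_nonneg (by linarith) (abs_nonneg _)
  have t3 : 0 ≤ (2 / r₁ ^ 2) * (|((m:ℝ) + n) * n| - ((m:ℝ) + n) * n) :=
    mul_nonneg hb0 (by linarith [le_abs_self (((m:ℝ) + n) * n)])
  have t4 : 0 ≤ (4 * (H ^ 2 + 1)) * (((m:ℝ) + n) ^ 2 - |((m:ℝ) + n) * n| + (n:ℝ) ^ 2 - 1) :=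
    mul_nonneg hM0.le (by linarith)
  linarith only [t1, t2, t3, t4]

theorem stmt13 (α H r₁ r₂ : ℝ) (hα : 0 < α) (hα3 : α ≤ 1 / 3) (hH : 0 ≤ H)
    (h1 : 0 < r₁) (h2 : 0 < r₂)
    (hr1 : r₁ ^ 2 = 1 / 2 + H / (2 * Real.sqrt (1 + H ^ 2)))
    (hr2 : r₂ ^ 2 = 1 - r₁ ^ 2)
    (v₁ v₂ : ℝ × ℝ)
    (hv1 : v₁ = ((Real.sqrt (1 - (1 - α) * r₁ ^ 2))⁻¹ * (1 / r₁),
                 (Real.sqrt (1 - (1 - α) * r₁ ^ 2))⁻¹ * (r₂ * (1 - α) / Real.sqrt α)))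
    (hv2 : v₂ = (0, Real.sqrt (1 - (1 - α) * r₁ ^ 2) / (r₂ * Real.sqrt α))) :
    IsLeast {x : ℝ | ∃ m n : ℤ, ¬(m = 0 ∧ n = 0) ∧
        x = ((m : ℝ) * v₁.1 + (n : ℝ) * v₂.1) ^ 2 + ((m : ℝ) * v₁.2 + (n : ℝ) * v₂.2) ^ 2}
      (4 * (H ^ 2 + 1))
    ↔ H ≤ (1 - 3 * α) / (2 * Real.sqrt (α * (1 - 2 * α))) := by
  have hα1 : α < 1 := by linarith
  have h12 : 0 < 1 - 2 * α := by linarith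
  set s := Real.sqrt (1 + H ^ 2) with hs
  have hs0 : 0 < s := Real.sqrt_pos.mpr (by positivity)
  have hs2 : s ^ 2 = 1 + H ^ 2 := Real.sq_sqrt (by positivity)
  have hr1pos : 0 < r₁ ^ 2 := by positivity
  have hr2pos : 0 < r₂ ^ 2 := by positivity
  have hr1s : 2 * s * r₁ ^ 2 = s + H := by rw [hr1]; field_simp
  have hr2s : 2 * s * r₂ ^ 2 = s - H := by rw [hr2, hr1]; field_simp; ring
  have hprod : 4 * (H ^ 2 + 1) * (r₁ ^ 2 * r₂ ^ 2) = 1 := by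
    linear_combination (2 * s * r₂ ^ 2) * hr1s + (s + H) * hr2s
      + (1 - 4 * (r₁ ^ 2 * r₂ ^ 2)) * hs2
  have hone : (0:ℝ) < 1 - r₁ ^ 2 := by nlinarith [hr2pos]
  have hDpos : 0 < 1 - (1 - α) * r₁ ^ 2 := by nlinarith [hr1pos]
  set d := Real.sqrt (1 - (1 - α) * r₁ ^ 2) with hdd
  have hd0 : 0 < d := Real.sqrt_pos.mpr hDpos
  have hd2 : d ^ 2 = 1 - (1 - α) * r₁ ^ 2 := Real.sq_sqrt hDpos.le
  set q := Real.sqrt α with hqq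
  have hq0 : 0 < q := Real.sqrt_pos.mpr hα
  have hq2 : q ^ 2 = α := Real.sq_sqrt hα.le
  have hv11 : v₁.1 = d⁻¹ * (1 / r₁) := by rw [hv1]
  have hv12 : v₁.2 = d⁻¹ * (r₂ * (1 - α) / q) := by rw [hv1]
  have hv21 : v₂.1 = 0 := by rw [hv2]
  have hv22 : v₂.2 = d / (r₂ * q) := by rw [hv2]
  have sq1 : (d⁻¹ * (1 / r₁)) ^ 2 = 1 / ((1 - (1 - α) * r₁ ^ 2) * r₁ ^ 2) := by
    rw [mul_pow, inv_pow, hd2]; field_simp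
  have sq2 : (d⁻¹ * (r₂ * (1 - α) / q)) ^ 2
      = ((1 - r₁ ^ 2) * (1 - α) ^ 2) / ((1 - (1 - α) * r₁ ^ 2) * α) := by
    rw [mul_pow, inv_pow, hd2, div_pow, mul_pow, hq2, hr2]; field_simp
  have sq3 : (d / (r₂ * q)) ^ 2 = (1 - (1 - α) * r₁ ^ 2) / ((1 - r₁ ^ 2) * α) := by
    rw [div_pow, mul_pow, hd2, hq2, hr2]
  have hA : v₁.1 ^ 2 + v₁.2 ^ 2 = 1 / r₁ ^ 2 + (1 - α) / α := by
    rw [hv11, hv12, sq1, sq2]; field_simp; ring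
  have hB : v₁.2 * v₂.2 = (1 - α) / α := by
    rw [hv12, hv22]
    field_simp
    linear_combination (-(1 - α)) * hq2
  have hM4 : 4 * (H ^ 2 + 1) = 1 / (r₁ ^ 2 * (1 - r₁ ^ 2)) := by
    rw [← hr2]
    field_simp
    linear_combination hprod
  have hC : v₂.2 ^ 2 = (1 - α) / α - 1 / r₁ ^ 2 + 4 * (H ^ 2 + 1) := by
    rw [hv22, sq3, hM4]; field_simp; ring
  have key : ∀ m n : ℝ, (m * v₁.1 + n * v₂.1) ^ 2 + (m * v₁.2 + n * v₂.2) ^ 2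
      = (1 / r₁ ^ 2 + (1 - α) / α) * (m + n) ^ 2 - (2 / r₁ ^ 2) * ((m + n) * n)
        + (4 * (H ^ 2 + 1)) * n ^ 2 := by
    intro m n
    linear_combination (m ^ 2) * hA + (2 * m * n) * hB + (n ^ 2) * hC
      + (2 * m * n * v₁.1 + n ^ 2 * v₂.1) * hv21
  -- condition equivalences
  have hβ0 : 0 < Real.sqrt (α * (1 - 2 * α)) := Real.sqrt_pos.mpr (by positivity)
  have hβ2 : (Real.sqrt (α * (1 - 2 * α))) ^ 2 = α * (1 - 2 * α) :=
    Real.sq_sqrt (by positivity)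
  have hiff1 := stmt13_aux_iff1 α H s (Real.sqrt (α * (1 - 2 * α))) hα hα3 hH hs0 hs2 hβ0 hβ2
  have hiff2 : ((1 - α) * H ≤ (1 - 3 * α) * s) ↔ (α ≤ (1 - α) * r₂ ^ 2) := by
    have e : 2 * s * ((1 - α) * r₂ ^ 2 - α) = (1 - 3 * α) * s - (1 - α) * H := by
      linear_combination (1 - α) * hr2s
    constructor
    · intro h
      have hx : 2 * s * 0 ≤ 2 * s * ((1 - α) * r₂ ^ 2 - α) := by
        rw [e]; linarith
      have := le_of_mul_le_mul_left hx (by linarith : (0:ℝ) < 2 * s)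
      linarith
    · intro h
      have hx : 2 * s * 0 ≤ 2 * s * ((1 - α) * r₂ ^ 2 - α) :=
        mul_le_mul_of_nonneg_left (by linarith) (by linarith)
      rw [e] at hx; linarith
  rw [hiff1, hiff2]
  constructor
  · rintro ⟨-, hlb⟩
    have hmem : (1 / r₁ ^ 2 + (1 - α) / α) ∈ {x : ℝ | ∃ m n : ℤ, ¬(m = 0 ∧ n = 0) ∧
        x = ((m : ℝ) * v₁.1 + (n : ℝ) * v₂.1) ^ 2 + ((m : ℝ) * v₁.2 + (n : ℝ) * v₂.2) ^ 2} := by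
      refine ⟨1, 0, by norm_num, ?_⟩
      have k := key 1 0
      push_cast
      linear_combination -k
    exact stmt13_aux_dir1 α H r₁ r₂ hα hα1 h1 h2 hr2 hprod (hlb hmem)
  · intro hge
    have hAM := stmt13_aux_dir2 α H r₁ r₂ hα hα1 h1 h2 hr2 hprod hge
    have h2r : 2 * r₂ ^ 2 ≤ 1 := by
      have hx : s * (2 * r₂ ^ 2) ≤ s * 1 := by
        rw [show s * (2 * r₂ ^ 2) = 2 * s * r₂ ^ 2 from by ring, hr2s]; linarith only [hH]
      exact le_of_mul_le_mul_left hx hs0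
    have hbM : 2 / r₁ ^ 2 ≤ 4 * (H ^ 2 + 1) := by
      rw [div_le_iff₀ hr1pos]
      have hx : 0 ≤ (4 * (H ^ 2 + 1) * r₁ ^ 2) * (1 - 2 * r₂ ^ 2) :=
        mul_nonneg (by positivity) (by linarith only [h2r])
      linarith only [hx, hprod]
    constructor
    · refine ⟨1, -1, by norm_num, ?_⟩
      have k := key 1 (-1)
      push_cast
      linear_combination -k
    · rintro x ⟨m, n, hmn, rfl⟩
      rw [key]
      exact stmt13_aux_final α H r₁ m n hmn hAM hbM hr1pos
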